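/- For every integer n ≥ 2, the Beta-binomial(1/2,1/2) distribution places mass at least 1/(6π) on the central interval: ∑_{y=⌈n/3⌉}^{⌊2n/3⌋} Γ(y+1/2)Γ(n-y+1/2)/(π Γ(y+1)Γ(n-y+1)) ≥ 1/(6π). -/
import Mathlib


open Real

lemma gamma_half_lower : ∀ k : ℕ, 1 ≤ k →
    Real.sqrt π * Real.Gamma ((k : ℝ) + 1) ≤
      2 * Real.sqrt k * Real.Gamma ((k : ℝ) + 1/2) := by
  intro k hk
  induction k with
  | zero => omega
  | succ m ih =>
    rcases Nat.lt_or_ge m 1 with h | h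
    · -- base case m = 0
      interval_cases m
      push_cast
      rw [show (1:ℝ) + 1/2 = 1/2 + 1 by norm_num,
        show (1:ℝ) + 1 = 2 by norm_num,
        Real.Gamma_add_one (s := 1/2) (by norm_num), Real.Gamma_one_half_eq,
        Real.Gamma_two, Real.sqrt_one]
      nlinarith [Real.sqrt_nonneg π]
    · have ihm := ih h
      have hx : ((m:ℝ)) + 1 ≠ 0 := by positivity
      have hg : 0 < Real.Gamma ((m:ℝ) + 1/2) := Real.Gamma_pos_of_pos (by positivity)
      push_cast
      rw [show (m:ℝ) + 1 + 1 = ((m:ℝ) + 1) + 1 by ring,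
        Real.Gamma_add_one (s := (m:ℝ) + 1) hx,
        show (m:ℝ) + 1 + 1/2 = ((m:ℝ) + 1/2) + 1 by ring,
        Real.Gamma_add_one (s := (m:ℝ) + 1/2) (by positivity)]
      have key : Real.sqrt m * ((m:ℝ) + 1) ≤ Real.sqrt ((m:ℝ)+1) * ((m:ℝ) + 1/2) := by
        rw [show Real.sqrt m * ((m:ℝ)+1) = Real.sqrt ((m:ℝ) * ((m:ℝ)+1)^2) by
              rw [Real.sqrt_mul (by positivity), Real.sqrt_sq (by positivity)],
            show Real.sqrt ((m:ℝ)+1) * ((m:ℝ)+1/2) = Real.sqrt (((m:ℝ)+1) * ((m:ℝ)+1/2)^2) by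
              rw [Real.sqrt_mul (by positivity), Real.sqrt_sq (by positivity)]]
        exact Real.sqrt_le_sqrt (by nlinarith)
      have hsm : (0:ℝ) ≤ Real.sqrt m := Real.sqrt_nonneg _
      have hsp : (0:ℝ) ≤ Real.sqrt π := Real.sqrt_nonneg _
      have hgn : (0:ℝ) < Real.Gamma ((m:ℝ) + 1) := Real.Gamma_pos_of_pos (by positivity)
      calc Real.sqrt π * (((m:ℝ)+1) * Real.Gamma ((m:ℝ)+1))
          = ((m:ℝ)+1) * (Real.sqrt π * Real.Gamma ((m:ℝ)+1)) := by ring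
        _ ≤ ((m:ℝ)+1) * (2 * Real.sqrt m * Real.Gamma ((m:ℝ)+1/2)) := by
            apply mul_le_mul_of_nonneg_left ihm (by positivity)
        _ = 2 * (Real.sqrt m * ((m:ℝ)+1)) * Real.Gamma ((m:ℝ)+1/2) := by ring
        _ ≤ 2 * (Real.sqrt ((m:ℝ)+1) * ((m:ℝ)+1/2)) * Real.Gamma ((m:ℝ)+1/2) := by
            apply mul_le_mul_of_nonneg_right _ (le_of_lt hg)
            linarith
        _ = 2 * Real.sqrt ((m:ℝ)+1) * (((m:ℝ)+1/2) * Real.Gamma ((m:ℝ)+1/2)) := by ring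

lemma term_lower (n y : ℕ) (hy : 1 ≤ y) (hyn : y + 1 ≤ n) :
    (1:ℝ) / (2 * n) ≤
      Real.Gamma ((y : ℝ) + 1/2) * Real.Gamma ((n : ℝ) - y + 1/2) /
        (π * Real.Gamma ((y : ℝ) + 1) * Real.Gamma ((n : ℝ) - y + 1)) := by
  set m : ℕ := n - y with hm
  have hmn : (n:ℝ) - y = (m:ℝ) := by
    rw [hm]; push_cast [Nat.cast_sub (by omega : y ≤ n)]; ring
  rw [hmn]
  have hm1 : 1 ≤ m := by omega
  have h1 := gamma_half_lower y hy
  have h2 := gamma_half_lower m hm1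
  have hg1 : 0 < Real.Gamma ((y:ℝ) + 1/2) := Real.Gamma_pos_of_pos (by positivity)
  have hg2 : 0 < Real.Gamma ((m:ℝ) + 1/2) := Real.Gamma_pos_of_pos (by positivity)
  have hf1 : 0 < Real.Gamma ((y:ℝ) + 1) := Real.Gamma_pos_of_pos (by positivity)
  have hf2 : 0 < Real.Gamma ((m:ℝ) + 1) := Real.Gamma_pos_of_pos (by positivity)
  have hpi : (0:ℝ) < π := Real.pi_pos
  have hn0 : (0:ℝ) < n := by
    have : 0 < n := by omega
    exact_mod_cast this
  rw [div_le_div_iff₀ (by positivity) (by positivity)]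
  have hprod : Real.sqrt π * Real.Gamma ((y:ℝ)+1) * (Real.sqrt π * Real.Gamma ((m:ℝ)+1)) ≤
      2 * Real.sqrt y * Real.Gamma ((y:ℝ)+1/2) * (2 * Real.sqrt m * Real.Gamma ((m:ℝ)+1/2)) :=
    mul_le_mul h1 h2 (by positivity) (by positivity)
  have hsqpi : Real.sqrt π * Real.sqrt π = π := Real.mul_self_sqrt (le_of_lt hpi)
  have hym : Real.sqrt y * Real.sqrt m ≤ (n:ℝ) / 2 := by
    rw [← Real.sqrt_mul (by positivity)]
    have hs : Real.sqrt ((y:ℝ) * m) ≤ Real.sqrt (((n:ℝ)/2)^2) := by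
      apply Real.sqrt_le_sqrt
      have hyn' : (y:ℝ) + m = n := by
        rw [hm]; push_cast [Nat.cast_sub (by omega : y ≤ n)]; ring
      nlinarith [sq_nonneg ((y:ℝ) - m)]
    rwa [Real.sqrt_sq (by positivity)] at hs
  have hgg : (0:ℝ) < Real.Gamma ((y:ℝ)+1/2) * Real.Gamma ((m:ℝ)+1/2) := mul_pos hg1 hg2
  calc (1:ℝ) * (π * Real.Gamma ((y:ℝ)+1) * Real.Gamma ((m:ℝ)+1))
      = Real.sqrt π * Real.Gamma ((y:ℝ)+1) * (Real.sqrt π * Real.Gamma ((m:ℝ)+1)) := by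
        linear_combination (- (Real.Gamma ((y:ℝ)+1) * Real.Gamma ((m:ℝ)+1))) * hsqpi
    _ ≤ 2 * Real.sqrt y * Real.Gamma ((y:ℝ)+1/2) * (2 * Real.sqrt m * Real.Gamma ((m:ℝ)+1/2)) :=
        hprod
    _ = 4 * (Real.sqrt y * Real.sqrt m *
          (Real.Gamma ((y:ℝ)+1/2) * Real.Gamma ((m:ℝ)+1/2))) := by ring
    _ ≤ 4 * ((n:ℝ)/2 * (Real.Gamma ((y:ℝ)+1/2) * Real.Gamma ((m:ℝ)+1/2))) := by
        have := mul_le_mul_of_nonneg_right hym (le_of_lt hgg)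
        linarith
    _ = Real.Gamma ((y:ℝ)+1/2) * Real.Gamma ((m:ℝ)+1/2) * (2 * n) := by ring

theorem betaBinomial_central_mass (n : ℕ) (hn : 2 ≤ n) :
    ∑ y ∈ Finset.Icc ((n + 2) / 3) (2 * n / 3),
      Real.Gamma ((y : ℝ) + 1/2) * Real.Gamma ((n : ℝ) - y + 1/2) /
        (π * Real.Gamma ((y : ℝ) + 1) * Real.Gamma ((n : ℝ) - y + 1)) ≥
    1 / (6 * π) := by
  have hbound : ∀ y ∈ Finset.Icc ((n + 2) / 3) (2 * n / 3),
      (1:ℝ) / (2 * n) ≤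
        Real.Gamma ((y : ℝ) + 1/2) * Real.Gamma ((n : ℝ) - y + 1/2) /
          (π * Real.Gamma ((y : ℝ) + 1) * Real.Gamma ((n : ℝ) - y + 1)) := by
    intro y hy
    rw [Finset.mem_Icc] at hy
    exact term_lower n y (by omega) (by omega)
  have hsum := Finset.card_nsmul_le_sum _ _ _ hbound
  rw [nsmul_eq_mul] at hsum
  have hcard : (Finset.Icc ((n + 2) / 3) (2 * n / 3)).card = 2 * n / 3 + 1 - (n + 2) / 3 :=
    Nat.card_Icc _ _
  have hcard3 : n - 1 ≤ 3 * (2 * n / 3 + 1 - (n + 2) / 3) := by omega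
  have hcardR : ((n:ℝ) - 1) / 3 ≤ ((Finset.Icc ((n + 2) / 3) (2 * n / 3)).card : ℝ) := by
    rw [hcard]
    have h : ((n - 1 : ℕ) : ℝ) ≤ ((3 * (2 * n / 3 + 1 - (n + 2) / 3) : ℕ) : ℝ) := by
      exact_mod_cast hcard3
    push_cast [Nat.cast_sub (by omega : 1 ≤ n)] at h
    linarith
  have hpi : (3:ℝ) < π := Real.pi_gt_three
  have hn0 : (0:ℝ) < n := by positivity
  have step1 : 1 / (6 * π) ≤ ((n:ℝ) - 1) / 3 * (1 / (2 * n)) := by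
    rw [div_mul_div_comm, div_le_div_iff₀ (by positivity) (by positivity)]
    have h2 : (2:ℝ) ≤ n := by exact_mod_cast hn
    nlinarith [mul_nonneg (by linarith : (0:ℝ) ≤ π - 3) (by linarith : (0:ℝ) ≤ (n:ℝ) - 1)]
  have step2 : ((n:ℝ) - 1) / 3 * (1 / (2 * n)) ≤
      ((Finset.Icc ((n + 2) / 3) (2 * n / 3)).card : ℝ) * (1 / (2 * n)) :=
    mul_le_mul_of_nonneg_right hcardR (by positivity)
  linarith
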